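/- Let $E$ be a nonempty convex subset of $\mathbb{R}^{J+1}$ and let $u \in E$ be Pareto optimal in $E$. Then the minimal face $G_E(u)$ of $E$ containing $u$ consists entirely of Pareto optimal points of $E$. -/

import Mathlib

/-- `D` is an extreme subset of `E`. -/
def IsExtremeSubset {V : Type*} [AddCommGroup V] [Module ℝ V] (E D : Set V) : Prop :=
  D.Nonempty ∧ D ⊆ E ∧
    ∀ u ∈ D, ∀ α : ℝ, 0 < α → α < 1 → ∀ u₁ ∈ E, ∀ u₂ ∈ E,
      u = α • u₁ + (1 - α) • u₂ → u₁ ∈ D ∧ u₂ ∈ D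

/-- `F` is a face of `E`: a nonempty convex extreme subset. -/
def IsFaceOf {V : Type*} [AddCommGroup V] [Module ℝ V] (E F : Set V) : Prop :=
  Convex ℝ F ∧ IsExtremeSubset E F

/-- `u` is a Pareto optimal point of `E ⊆ ℝ^{J+1}`. -/
def IsPareto {J : ℕ} (E : Set (Fin (J + 1) → ℝ)) (u : Fin (J + 1) → ℝ) : Prop :=
  u ∈ E ∧ ∀ v ∈ E, (∀ j, v j ≤ u j) → v = u

/-- The minimal face of `E` containing `u`: the intersection of all faces of `E`
containing `u`. -/
def minimalFace {V : Type*} [AddCommGroup V] [Module ℝ V] (E : Set V) (u : V) : Set V :=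
  ⋂₀ {F | IsFaceOf E F ∧ u ∈ F}

/-- Segment recombination helper: if `u` is in the open segment `(x, y)` and `x` is in the
open segment `(v₁, v₂)`, then `u` is in an open segment from `v₁` to a point of `E`. -/
lemma seg_aux {J : ℕ} (E : Set (Fin (J + 1) → ℝ)) (hEconv : Convex ℝ E)
    (u x y v₁ v₂ : Fin (J + 1) → ℝ) (hyE : y ∈ E) (hv₂ : v₂ ∈ E)
    (γ β : ℝ) (hγ0 : 0 < γ) (hγ1 : γ < 1) (hβ0 : 0 < β) (hβ1 : β < 1)
    (h1 : u = γ • x + (1 - γ) • y) (h2 : x = β • v₁ + (1 - β) • v₂) :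
    ∃ z ∈ E, ∃ α : ℝ, 0 < α ∧ α < 1 ∧ u = α • v₁ + (1 - α) • z := by
  have hαβ1 : γ * β < 1 := by nlinarith
  have hden : (0:ℝ) < 1 - γ * β := by linarith
  refine ⟨(γ * (1 - β) / (1 - γ * β)) • v₂ + ((1 - γ) / (1 - γ * β)) • y, ?_, γ * β,
    by positivity, hαβ1, ?_⟩
  · refine hEconv hv₂ hyE (div_nonneg (by nlinarith) hden.le) (div_nonneg (by linarith) hden.le) ?_
    field_simp
    ring
  · funext j
    have h1j := congrFun h1 j
    have h2j := congrFun h2 j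
    simp only [Pi.add_apply, Pi.smul_apply, smul_eq_mul] at h1j h2j ⊢
    have hw₂ : (1 - γ * β) * (γ * (1 - β) / (1 - γ * β)) = γ * (1 - β) := by
      field_simp
    have hw₃ : (1 - γ * β) * ((1 - γ) / (1 - γ * β)) = 1 - γ := by
      field_simp
    linear_combination h1j + γ * h2j - v₂ j * hw₂ - y j * hw₃

theorem minimalFace_subset_pareto {J : ℕ}
    (E : Set (Fin (J + 1) → ℝ)) (hEne : E.Nonempty) (hEconv : Convex ℝ E)
    (u : Fin (J + 1) → ℝ) (hu : IsPareto E u) :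
    ∀ x ∈ minimalFace E u, IsPareto E x := by
  obtain ⟨huE, huP⟩ := hu
  -- the candidate face
  set G : Set (Fin (J + 1) → ℝ) :=
    {x | x ∈ E ∧ ∃ y ∈ E, ∃ α : ℝ, 0 < α ∧ α < 1 ∧ u = α • x + (1 - α) • y} with hGdef
  have huG : u ∈ G := by
    refine ⟨huE, u, huE, 1/2, by norm_num, by norm_num, ?_⟩
    funext j
    simp only [Pi.add_apply, Pi.smul_apply, smul_eq_mul]
    ring
  -- every element of G is Pareto optimal
  have hGpareto : ∀ x ∈ G, IsPareto E x := by
    rintro x ⟨hxE, y, hyE, α, hα0, hα1, hxy⟩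
    refine ⟨hxE, fun v hvE hle => ?_⟩
    have hwE : α • v + (1 - α) • y ∈ E := hEconv hvE hyE hα0.le (by linarith) (by ring)
    have hwle : ∀ j, (α • v + (1 - α) • y) j ≤ u j := by
      intro j
      have := congrFun hxy j
      simp only [Pi.add_apply, Pi.smul_apply, smul_eq_mul] at this ⊢
      nlinarith [hle j]
    have hwu : α • v + (1 - α) • y = u := huP _ hwE hwle
    funext j
    have h := congrFun (hwu.trans hxy) j
    simp only [Pi.add_apply, Pi.smul_apply, smul_eq_mul] at h
    have : α * v j = α * x j := by linarith
    exact mul_left_cancel₀ hα0.ne' this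
  -- G is convex
  have hGconv : Convex ℝ G := by
    rintro x₁ ⟨hx₁E, y₁, hy₁E, α₁, hα₁0, hα₁1, h1⟩ x₂ ⟨hx₂E, y₂, hy₂E, α₂, hα₂0, hα₂1, h2⟩
      a b ha hb hab
    refine ⟨hEconv hx₁E hx₂E ha hb hab, ?_⟩
    have hDpos : (0:ℝ) < α₁ * b + α₂ * a := by
      rcases lt_or_ge 0 a with h | h
      · nlinarith [mul_pos (mul_pos hα₂0 h) (sub_pos.mpr hα₁1),
          mul_nonneg (mul_nonneg hα₁0.le hb) (sub_pos.mpr hα₂1).le]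
      · have hb1 : b = 1 - a := by linarith
        nlinarith
    obtain ⟨D, hD⟩ : ∃ D : ℝ, D = α₁ * b + α₂ * a := ⟨_, rfl⟩
    rw [← hD] at hDpos
    obtain ⟨l, hl⟩ : ∃ l : ℝ, l = α₂ * a / D := ⟨_, rfl⟩
    obtain ⟨c, hc⟩ : ∃ c : ℝ, c = α₁ * α₂ / D := ⟨_, rfl⟩
    have hc0 : 0 < c := by rw [hc]; positivity
    have hc1 : c < 1 := by
      rw [hc, div_lt_one hDpos, hD]
      rcases lt_or_ge 0 a with h | h
      · nlinarith [mul_pos (mul_pos hα₂0 h) (sub_pos.mpr hα₁1),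
          mul_nonneg (mul_nonneg hα₁0.le hb) (sub_pos.mpr hα₂1).le]
      · have ha0 : a = 0 := le_antisymm h ha
        have hb1 : b = 1 := by linarith
        rw [ha0, hb1]; nlinarith
    have hl0 : 0 ≤ l := by rw [hl]; positivity
    have hl1 : l ≤ 1 := by
      rw [hl, div_le_one hDpos, hD]
      nlinarith [mul_nonneg hα₁0.le hb]
    have key : D * c = α₁ * α₂ := by
      rw [hc, mul_div_cancel₀ _ hDpos.ne']
    have keyl : D * l = α₂ * a := by
      rw [hl, mul_div_cancel₀ _ hDpos.ne']
    have hca : c * a = l * α₁ :=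
      mul_left_cancel₀ hDpos.ne' (by linear_combination a * key - α₁ * keyl)
    have hcb : c * b = (1 - l) * α₂ :=
      mul_left_cancel₀ hDpos.ne' (by linear_combination b * key + α₂ * keyl - α₂ * hD)
    have h1c : (0:ℝ) < 1 - c := by linarith
    refine ⟨(l * (1 - α₁) / (1 - c)) • y₁ + ((1 - l) * (1 - α₂) / (1 - c)) • y₂, ?_, c, hc0, hc1, ?_⟩
    · refine hEconv hy₁E hy₂E (div_nonneg (by nlinarith) h1c.le)
        (div_nonneg (by nlinarith) h1c.le) ?_
      rw [← add_div, div_eq_one_iff_eq h1c.ne']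
      linear_combination hca + hcb - c * hab
    · funext j
      have h1j := congrFun h1 j
      have h2j := congrFun h2 j
      simp only [Pi.add_apply, Pi.smul_apply, smul_eq_mul] at h1j h2j ⊢
      have hw₁ : (1 - c) * (l * (1 - α₁) / (1 - c)) = l * (1 - α₁) :=
        mul_div_cancel₀ _ h1c.ne'
      have hw₂ : (1 - c) * ((1 - l) * (1 - α₂) / (1 - c)) = (1 - l) * (1 - α₂) :=
        mul_div_cancel₀ _ h1c.ne'
      linear_combination l * h1j + (1 - l) * h2j - x₁ j * hca - x₂ j * hcb
        - y₁ j * hw₁ - y₂ j * hw₂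
  -- G is extreme
  have hGext : IsExtremeSubset E G := by
    refine ⟨⟨u, huG⟩, fun x hx => hx.1, ?_⟩
    rintro x ⟨hxE, y, hyE, γ, hγ0, hγ1, hxy⟩ β hβ0 hβ1 v₁ hv₁E v₂ hv₂E hxv
    constructor
    · obtain ⟨z, hzE, α, hα0, hα1, hz⟩ :=
        seg_aux E hEconv u x y v₁ v₂ hyE hv₂E γ β hγ0 hγ1 hβ0 hβ1 hxy hxv
      exact ⟨hv₁E, z, hzE, α, hα0, hα1, hz⟩
    · have hxv' : x = (1 - β) • v₂ + (1 - (1 - β)) • v₁ := by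
        rw [hxv]; funext j
        simp only [Pi.add_apply, Pi.smul_apply, smul_eq_mul]; ring
      obtain ⟨z, hzE, α, hα0, hα1, hz⟩ :=
        seg_aux E hEconv u x y v₂ v₁ hyE hv₁E γ (1 - β) hγ0 hγ1 (by linarith) (by linarith)
          hxy hxv'
      exact ⟨hv₂E, z, hzE, α, hα0, hα1, hz⟩
  -- conclude
  intro x hx
  exact hGpareto x (hx G ⟨⟨hGconv, hGext⟩, huG⟩)
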